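/- arXiv:nlin/0201060 — 3 statements merged into one kernel-verified Lean document; each statement's English description precedes it below -/
import Mathlib

section
/- Let v : ℝ × ℝⁿ → ℝⁿ be a C¹ time-dependent vector field and let g : ℝ × ℝⁿ → (symmetric continuous bilinear forms on ℝⁿ) be C¹. Let s : ℝ → ℝⁿ be a solution of the dynamic equation defined by v, and let s̄ : ℝ → ℝⁿ be a Jacobi field along s, i.e. a solution of the variation equation s̄'(t) = (D_x v)(t, s t) (s̄ t). Then for every t ∈ ℝ, the real-valued function t ↦ g(t, s t)(s̄ t, s̄ t) has derivative at t equal to L(t, s t)(s̄ t, s̄ t), where L is the covariant Lyapunov tensor of the pair (g, v). -/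
open Function

variable {E : Type*} [NormedAddCommGroup E] [InnerProductSpace ℝ E]
  [FiniteDimensional ℝ E]

/-- `s` is a solution of the first order dynamic equation defined by the
time-dependent vector field `v`. -/
def IsSolution (v : ℝ → E → E) (s : ℝ → E) : Prop :=
  ∀ t : ℝ, HasDerivAt s (v t (s t)) t

/-- `s̄` is a Jacobi field along the solution `s`, i.e. a solution
of the variation equation `s̄' t = (D_x v) (t, s t) (s̄ t)`. -/
def IsJacobiField (v : ℝ → E → E) (s sbar : ℝ → E) : Prop :=
  ∀ t : ℝ, HasDerivAt sbar (fderiv ℝ (v t) (s t) (sbar t)) t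

/-- The covariant Lyapunov tensor of a time-dependent metric `g` and a
time-dependent vector field `v`:
`L(t,x)(u,w) = ∂ₜg(t,x)(u,w) + (D_x g)(t,x)[v(t,x)](u,w)
  + g(t,x)((D_x v)(t,x) u, w) + g(t,x)(u, (D_x v)(t,x) w)`. -/
noncomputable def covLyapunov (g : ℝ → E → (E →L[ℝ] E →L[ℝ] ℝ)) (v : ℝ → E → E)
    (t : ℝ) (x u w : E) : ℝ :=
  deriv (fun τ => g τ x) t u w
    + fderiv ℝ (fun y => g t y) x (v t x) u w
    + g t x (fderiv ℝ (v t) x u) w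
    + g t x u (fderiv ℝ (v t) x w)

/-- Along a solution `s` and a Jacobi field `s̄`, the covariant Lyapunov tensor
computes the time derivative of `g(t, s t)(s̄ t, s̄ t)`. -/
theorem hasDerivAt_metric_jacobi
    (v : ℝ → E → E) (g : ℝ → E → (E →L[ℝ] E →L[ℝ] ℝ))
    (hv : ContDiff ℝ 1 (uncurry v))
    (hg : ContDiff ℝ 1 (uncurry g))
    (hgsym : ∀ (t : ℝ) (x u w : E), g t x u w = g t x w u)
    (s sbar : ℝ → E) (hs : IsSolution v s) (hsbar : IsJacobiField v s sbar) :
    ∀ t : ℝ, HasDerivAt (fun τ => g τ (s τ) (sbar τ) (sbar τ))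
      (covLyapunov g v t (s t) (sbar t) (sbar t)) t := by
  intro t
  have hgd : HasFDerivAt (uncurry g) (fderiv ℝ (uncurry g) (t, s t)) (t, s t) :=
    ((hg.differentiable one_ne_zero) (t, s t)).hasFDerivAt
  set F := fderiv ℝ (uncurry g) (t, s t) with hF
  have hcurve : HasDerivAt (fun τ => ((τ, s τ) : ℝ × E)) (1, v t (s t)) t :=
    HasDerivAt.prodMk (hasDerivAt_id t) (hs t)
  have hG : HasDerivAt (fun τ => g τ (s τ)) (F (1, v t (s t))) t :=
    by have := hgd.comp_hasDerivAt (E := E →L[ℝ] E →L[ℝ] ℝ) t hcurve; exact this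
  have hpt : HasDerivAt (fun τ => g τ (s t)) (F (1, 0)) t := by
    have h2 : HasDerivAt (fun τ => ((τ, s t) : ℝ × E)) ((1 : ℝ), (0 : E)) t :=
      HasDerivAt.prodMk (hasDerivAt_id t) (hasDerivAt_const t (s t))
    exact hgd.comp_hasDerivAt (E := E →L[ℝ] E →L[ℝ] ℝ) t h2
  have hpt' : deriv (fun τ => g τ (s t)) t = F (1, 0) := by have := hpt.deriv (𝕜 := ℝ) (F := E →L[ℝ] E →L[ℝ] ℝ); exact this
  have hpx : HasFDerivAt (fun y => g t y)
      (F.comp (ContinuousLinearMap.inr ℝ ℝ E)) (s t) := by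
    have h2 : HasFDerivAt (fun y : E => ((t, y) : ℝ × E))
        (ContinuousLinearMap.inr ℝ ℝ E) (s t) :=
      HasFDerivAt.prodMk (hasFDerivAt_const t (s t)) (hasFDerivAt_id (s t))
    exact hgd.comp (G := E →L[ℝ] E →L[ℝ] ℝ) (s t) h2
  have hpx' : fderiv ℝ (fun y => g t y) (s t) (v t (s t)) = F (0, v t (s t)) := by
    rw [hpx.fderiv]; rfl
  have hsum : F (1, v t (s t)) = F (1, 0) + F (0, v t (s t)) := by
    rw [← F.map_add]; norm_num
  have h1 := (hG.clm_apply (hsbar t)).clm_apply (hsbar t)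
  convert h1 using 1
  case e'_9 => simp only [covLyapunov, hpt', hpx', hsum, ContinuousLinearMap.add_apply]
  all_goals rfl
end

section
/- Let v : ℝ × ℝⁿ → ℝⁿ be a C¹ time-dependent vector field, locally Lipschitz in the space variable, with a global flow φ. Assume that for each t the map ζ_t := φ t 0 is differentiable, and that for each x the map t ↦ J_x(t) := D(φ 0 t ·)(x) (the Fréchet derivative of y ↦ φ 0 t y at x) is differentiable with J_x(0) = id and J_x'(t) = (D_x v)(t, φ 0 t x) ∘ J_x(t). Define the time-dependent pullback metric g(t,x)(u,w) := ⟨Dζ_t(x) u, Dζ_t(x) w⟩, where ⟨·,·⟩ is the Euclidean inner product. Then for every solution s of the dynamic equation defined by v and every Jacobi field s̄ along s, one has g(t, s t)(s̄ t, s̄ t) = ‖s̄ 0‖² for all t ∈ ℝ; in particular t ↦ g(t, s t)(s̄ t, s̄ t) is constant, i.e. the covariant Lyapunov tensor of g vanishes along every solution. -/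
open Function Set Filter Topology

variable {E : Type*} [NormedAddCommGroup E] [InnerProductSpace ℝ E]
  [FiniteDimensional ℝ E]

/-- `φ` is a global flow for the time-dependent vector field `v`. -/
def IsGlobalFlow (v : ℝ → E → E) (φ : ℝ → ℝ → E → E) : Prop :=
  ∀ (t₀ : ℝ) (x : E), φ t₀ t₀ x = x ∧ IsSolution v (fun t => φ t₀ t x)

theorem ode_unique_aux {F : Type*} [NormedAddCommGroup F] [NormedSpace ℝ F]
    {v : ℝ → F → F} {f g : ℝ → F}
    (hl : ∀ (t₁ : ℝ) (x₀ : F), ∃ (K : NNReal) (U : Set ℝ) (V : Set F),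
      U ∈ 𝓝 t₁ ∧ V ∈ 𝓝 x₀ ∧ ∀ t ∈ U, LipschitzOnWith K (v t) V)
    (hf : ∀ t, HasDerivAt f (v t (f t)) t)
    (hg : ∀ t, HasDerivAt g (v t (g t)) t)
    {t₀ : ℝ} (heq : f t₀ = g t₀) : f = g := by
  have hScl : IsClosed {t : ℝ | f t = g t} :=
    isClosed_eq (continuous_iff_continuousAt.2 fun t => (hf t).continuousAt)
      (continuous_iff_continuousAt.2 fun t => (hg t).continuousAt)
  have hSop : IsOpen {t : ℝ | f t = g t} := by
    classical
    rw [isOpen_iff_mem_nhds]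
    intro t₁ ht₁
    obtain ⟨K, U, V, hU, hV, hUV⟩ := hl t₁ (f t₁)
    set sset : ℝ → Set F := fun t => if t ∈ U then V else (∅ : Set F) with hsset
    have hv' : ∀ t, LipschitzOnWith K (v t) (sset t) := by
      intro t
      by_cases h : t ∈ U
      · simpa [hsset, h] using hUV t h
      · simpa [hsset, h] using lipschitzOnWith_empty K (v t)
    have hfV : ∀ᶠ t in 𝓝 t₁, f t ∈ V := (hf t₁).continuousAt.preimage_mem_nhds hV
    have hgV : ∀ᶠ t in 𝓝 t₁, g t ∈ V := by
      apply (hg t₁).continuousAt.preimage_mem_nhds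
      rwa [← ht₁]
    have hf' : ∀ᶠ t in 𝓝 t₁, HasDerivAt f (v t (f t)) t ∧ f t ∈ sset t := by
      filter_upwards [hfV, hU] with t h1 h2
      exact ⟨hf t, by simp [hsset, h2, h1]⟩
    have hg' : ∀ᶠ t in 𝓝 t₁, HasDerivAt g (v t (g t)) t ∧ g t ∈ sset t := by
      filter_upwards [hgV, hU] with t h1 h2
      exact ⟨hg t, by simp [hsset, h2, h1]⟩
    exact ODE_solution_unique_of_eventually (Eventually.of_forall hv') hf' hg' ht₁
  rcases (isClopen_iff.1 ⟨hScl, hSop⟩) with h | h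
  · exact absurd (h ▸ heq : (t₀ : ℝ) ∈ (∅ : Set ℝ)) (notMem_empty t₀)
  · exact funext fun t => (h ▸ mem_univ t : t ∈ {t | f t = g t})

/-- Pulling back the Euclidean metric by the initial-date trivialization
`ζ_t = φ t 0` produces a time-dependent metric
`g(t,x)(u,w) = ⟨Dζ_t(x) u, Dζ_t(x) w⟩` for which `g(t, s t)(s̄ t, s̄ t)` is
constantly `‖s̄ 0‖²` along every solution `s` and Jacobi field `s̄`; i.e. the
covariant Lyapunov tensor of this metric vanishes along every solution. -/
theorem pullback_metric_jacobi_constant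
    (v : ℝ → E → E) (φ : ℝ → ℝ → E → E)
    (hv : ContDiff ℝ 1 (uncurry v))
    (hv_lip : ∀ t : ℝ, LocallyLipschitz (v t))
    (hφ : IsGlobalFlow v φ)
    (hζ : ∀ t : ℝ, Differentiable ℝ (φ t 0))
    (hJ0 : ∀ x : E, fderiv ℝ (fun y => φ 0 0 y) x = ContinuousLinearMap.id ℝ E)
    (hJ : ∀ (x : E) (t : ℝ),
      HasDerivAt (fun τ => fderiv ℝ (fun y => φ 0 τ y) x)
        ((fderiv ℝ (v t) (φ 0 t x)).comp (fderiv ℝ (fun y => φ 0 t y) x)) t)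
    (g : ℝ → E → E → E → ℝ)
    (hgdef : ∀ (t : ℝ) (x u w : E),
      g t x u w = inner ℝ (fderiv ℝ (φ t 0) x u) (fderiv ℝ (φ t 0) x w))
    (s sbar : ℝ → E) (hs : IsSolution v s) (hsbar : IsJacobiField v s sbar) :
    ∀ t : ℝ, g t (s t) (sbar t) (sbar t) = ‖sbar 0‖ ^ 2 := by
  rcases subsingleton_or_nontrivial E with hE | hE
  · intro t
    rw [hgdef]
    rw [Subsingleton.elim (fderiv ℝ (φ t 0) (s t) (sbar t)) 0,
      Subsingleton.elim (sbar 0) 0]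
    simp
  -- joint local Lipschitz condition for v
  have hlv : ∀ (t₁ : ℝ) (x₀ : E), ∃ (K : NNReal) (U : Set ℝ) (V : Set E),
      U ∈ 𝓝 t₁ ∧ V ∈ 𝓝 x₀ ∧ ∀ τ ∈ U, LipschitzOnWith K (v τ) V := by
    intro t₁ x₀
    obtain ⟨K, W, hW, hlip⟩ := hv.locallyLipschitz (t₁, x₀)
    obtain ⟨U, hU, V, hV, hUVW⟩ := mem_nhds_prod_iff.1 hW
    refine ⟨K, U, V, hU, hV, fun τ hτ => ?_⟩
    intro y hy z hz
    have h := hlip (hUVW (Set.mk_mem_prod hτ hy)) (hUVW (Set.mk_mem_prod hτ hz))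
    simpa [uncurry, Prod.edist_eq] using h
  -- group law
  have hgrp : ∀ (a : ℝ) (y : E) (τ : ℝ), φ a τ (φ 0 a y) = φ 0 τ y := by
    intro a y
    have h := ode_unique_aux hlv (f := fun τ => φ a τ (φ 0 a y))
      (g := fun τ => φ 0 τ y) (fun τ => (hφ a (φ 0 a y)).2 τ) (fun τ => (hφ 0 y).2 τ)
      (t₀ := a) ((hφ a (φ 0 a y)).1)
    exact fun τ => congrFun h τ
  -- s is the flow line through s 0
  have hsφ : ∀ τ : ℝ, s τ = φ 0 τ (s 0) := by
    have h := ode_unique_aux hlv (f := s) (g := fun τ => φ 0 τ (s 0))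
      hs (fun τ => (hφ 0 (s 0)).2 τ) (t₀ := 0) ((hφ 0 (s 0)).1).symm
    exact fun τ => congrFun h τ
  set x : E := s 0 with hx
  set A : ℝ → E →L[ℝ] E := fun τ => fderiv ℝ (v τ) (s τ) with hA
  set K : ℝ → E →L[ℝ] E := fun τ => fderiv ℝ (fun y => φ 0 τ y) x with hK
  -- continuity of A
  have hs_cont : Continuous s := continuous_iff_continuousAt.2 fun τ => (hs τ).continuousAt
  have hA_eq : ∀ τ, A τ
      = (fderiv ℝ (uncurry v) (τ, s τ)).comp (ContinuousLinearMap.inr ℝ ℝ E) := by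
    intro τ
    have h1 : HasFDerivAt (fun y : E => ((τ : ℝ), y)) (ContinuousLinearMap.inr ℝ ℝ E) (s τ) :=
      HasFDerivAt.prodMk (hasFDerivAt_const τ _) (hasFDerivAt_id _)
    have h2 : HasFDerivAt (uncurry v) (fderiv ℝ (uncurry v) (τ, s τ)) (τ, s τ) :=
      (hv.differentiable one_ne_zero (τ, s τ)).hasFDerivAt
    have h3 : HasFDerivAt (v τ)
        ((fderiv ℝ (uncurry v) (τ, s τ)).comp (ContinuousLinearMap.inr ℝ ℝ E)) (s τ) :=
      h2.comp (s τ) h1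
    exact h3.fderiv
  have hAcont : Continuous A := by
    have h1 : Continuous fun τ => fderiv ℝ (uncurry v) (τ, s τ) :=
      (hv.continuous_fderiv one_ne_zero).comp (continuous_id.prodMk hs_cont)
    have h2 : Continuous fun τ =>
        (fderiv ℝ (uncurry v) (τ, s τ)).comp (ContinuousLinearMap.inr ℝ ℝ E) :=
      h1.clm_comp continuous_const
    exact (funext hA_eq : A = _) ▸ h2
  -- local-Lipschitz condition for the linear (variation) equation
  have hlA : ∀ (t₁ : ℝ) (x₀ : E), ∃ (Kc : NNReal) (U : Set ℝ) (V : Set E),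
      U ∈ 𝓝 t₁ ∧ V ∈ 𝓝 x₀ ∧ ∀ τ ∈ U, LipschitzOnWith Kc (fun u => A τ u) V := by
    intro t₁ x₀
    refine ⟨‖A t₁‖₊ + 1, {τ | ‖A τ‖₊ ≤ ‖A t₁‖₊ + 1}, Set.univ, ?_, univ_mem,
      fun τ hτ => (((A τ).lipschitz).weaken hτ).lipschitzOnWith⟩
    have hev : ∀ᶠ τ in 𝓝 t₁, ‖A τ‖₊ < ‖A t₁‖₊ + 1 :=
      (continuous_nnnorm.comp hAcont).continuousAt.eventually_lt continuousAt_const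
        (lt_add_one _)
    exact hev.mono fun τ hτ => le_of_lt hτ
  -- the Jacobi propagator curves solve the variation equation
  have hKode : ∀ (w : E) (τ : ℝ), HasDerivAt (fun σ => K σ w) (A τ (K τ w)) τ := by
    intro w τ
    have h1 := hJ x τ
    rw [← hsφ τ] at h1
    have h2 := h1.clm_apply (hasDerivAt_const τ w)
    simpa using h2
  -- sbar coincides with the propagated initial vector
  have hsbar_eq : ∀ τ : ℝ, sbar τ = K τ (sbar 0) := by
    have h := ode_unique_aux (v := fun τ u => A τ u) hlA (f := sbar)
      (g := fun σ => K σ (sbar 0)) hsbar (hKode (sbar 0)) (t₀ := 0)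
      (by show sbar 0 = fderiv ℝ (fun y => φ 0 0 y) x (sbar 0); rw [hJ0 x]; rfl)
    exact fun τ => congrFun h τ
  -- the propagator is injective
  have hKinj : ∀ (τ : ℝ) (w : E), K τ w = 0 → w = 0 := by
    intro τ w hw
    have h := ode_unique_aux (v := fun τ u => A τ u) hlA (f := fun _ => (0 : E))
      (g := fun σ => K σ w) (fun σ => by simpa using hasDerivAt_const σ (0 : E))
      (hKode w) (t₀ := τ) hw.symm
    have h0 : fderiv ℝ (fun y => φ 0 0 y) x w = 0 := (congrFun h 0).symm
    rw [hJ0 x] at h0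
    simpa using h0
  intro t
  -- differentiability of φ 0 t at x
  have hdiff : DifferentiableAt ℝ (fun y => φ 0 t y) x := by
    by_contra hnd
    obtain ⟨w, hw⟩ := exists_ne (0 : E)
    refine hw (hKinj t w ?_)
    rw [hK]
    simp [fderiv_zero_of_not_differentiableAt hnd]
  have hKfd : HasFDerivAt (fun y => φ 0 t y) (K t) x := hdiff.hasFDerivAt
  -- left inverse identity
  have hinv : ∀ y : E, φ t 0 (φ 0 t y) = y := by
    intro y
    have h := hgrp t y 0
    rw [(hφ 0 y).1] at h
    exact h
  -- chain rule : D ζ_t (s t) ∘ K t = id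
  have hζ' : HasFDerivAt (φ t 0) (fderiv ℝ (φ t 0) (s t)) (φ 0 t x) := by
    rw [← hsφ t]
    exact ((hζ t) (s t)).hasFDerivAt
  have hcomp : HasFDerivAt (fun y => φ t 0 (φ 0 t y))
      ((fderiv ℝ (φ t 0) (s t)).comp (K t)) x := hζ'.comp x hKfd
  have hid : HasFDerivAt (fun y => φ t 0 (φ 0 t y)) (ContinuousLinearMap.id ℝ E) x := by
    have he : (fun y => φ t 0 (φ 0 t y)) = id := funext hinv
    rw [he]
    exact hasFDerivAt_id x
  have hPK : (fderiv ℝ (φ t 0) (s t)).comp (K t) = ContinuousLinearMap.id ℝ E :=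
    hcomp.unique hid
  -- conclude
  have h1 : fderiv ℝ (φ t 0) (s t) (sbar t) = sbar 0 := by
    rw [hsbar_eq t]
    calc fderiv ℝ (φ t 0) (s t) (K t (sbar 0))
        = ((fderiv ℝ (φ t 0) (s t)).comp (K t)) (sbar 0) := rfl
      _ = sbar 0 := by rw [hPK]; rfl
  rw [hgdef, h1, real_inner_self_eq_norm_sq]
end

section
/- Let g : ℝ × ℝⁿ → (symmetric continuous bilinear forms on ℝⁿ) be C¹ and let u ∈ ℝⁿ, u ≠ 0. Assume that for every t ≥ 0 and every τ ∈ [0,1], the bilinear form (∂_t g)(t, τ • u) is negative definite (i.e. (∂_t g)(t, τ • u)(w,w) < 0 for every w ≠ 0). Then the function F(t) := ∫₀¹ g(t, τ • u)(u, u) dτ is strictly decreasing on [0, ∞): for all 0 ≤ t < t', F(t') < F(t). -/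
open Function intervalIntegral

/-- If the time derivative `∂ₜ g` of a C¹ time-dependent metric `g` is
negative definite at all points of the segment `τ • u`, `τ ∈ [0,1]`, at all
times `t ≥ 0`, then the segment energy `F(t) = ∫₀¹ g(t, τ • u)(u, u) dτ`
is strictly decreasing on `[0, ∞)`. -/
theorem segment_energy_strictAnti
    {E : Type*} [NormedAddCommGroup E] [InnerProductSpace ℝ E]
    [FiniteDimensional ℝ E]
    (g : ℝ → E → (E →L[ℝ] E →L[ℝ] ℝ))
    (hg : ContDiff ℝ 1 (uncurry g))
    (hgsym : ∀ (t : ℝ) (x u w : E), g t x u w = g t x w u)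
    (u : E) (hu : u ≠ 0)
    (hneg : ∀ t : ℝ, 0 ≤ t → ∀ τ ∈ Set.Icc (0:ℝ) 1, ∀ w : E, w ≠ 0 →
      deriv (fun t' => g t' (τ • u)) t w w < 0) :
    ∀ t t' : ℝ, 0 ≤ t → t < t' →
      (∫ τ in (0:ℝ)..1, g t' (τ • u) u u) < ∫ τ in (0:ℝ)..1, g t (τ • u) u u := by
  intro t t' ht htt'
  have hgd : Differentiable ℝ (uncurry g) := hg.differentiable one_ne_zero
  set L : (E →L[ℝ] E →L[ℝ] ℝ) →L[ℝ] ℝ :=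
    (ContinuousLinearMap.apply ℝ ℝ u).comp (ContinuousLinearMap.apply ℝ (E →L[ℝ] ℝ) u) with hL
  -- differentiability in time of the coefficient function
  have hφ : ∀ τ : ℝ, Differentiable ℝ (fun s => g s (τ • u)) := by
    intro τ
    exact fun s => by
      have h1 : DifferentiableAt ℝ (fun s : ℝ => (s, τ • u)) s := differentiableAt_id.prodMk (differentiableAt_const _)
      have h := (hgd (s, τ • u)).comp (G := E →L[ℝ] E →L[ℝ] ℝ) s h1
      exact h
  have hψ : ∀ τ s : ℝ,
      HasDerivAt (fun s => g s (τ • u) u u) ((deriv (fun s => g s (τ • u)) s) u u) s := by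
    intro τ s
    have := L.hasFDerivAt.comp_hasDerivAt s ((hφ τ s).hasDerivAt (F := E →L[ℝ] E →L[ℝ] ℝ))
    exact this
  -- pointwise strict decrease in time
  have hpt : ∀ τ ∈ Set.Icc (0:ℝ) 1, g t' (τ • u) u u < g t (τ • u) u u := by
    intro τ hτ
    have hanti : StrictAntiOn (fun s => g s (τ • u) u u) (Set.Ici 0) := by
      apply strictAntiOn_of_deriv_neg (convex_Ici 0)
      · exact Continuous.continuousOn (by
          have : Continuous (fun s : ℝ => g s (τ • u)) :=
            hg.continuous.comp (continuous_id.prodMk continuous_const)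
          exact (L.continuous.comp this))
      · intro x hx
        rw [interior_Ici] at hx
        rw [(hψ τ x).deriv]
        exact hneg x (le_of_lt hx) τ hτ u hu
    exact hanti ht (le_trans ht htt'.le) htt'
  -- continuity and integrability in τ
  have hcont : ∀ s : ℝ, Continuous (fun τ : ℝ => g s (τ • u) u u) := by
    intro s
    have : Continuous (fun τ : ℝ => g s (τ • u)) :=
      hg.continuous.comp (continuous_const.prodMk (continuous_id.smul continuous_const))
    exact L.continuous.comp this
  have hint : ∀ s : ℝ, IntervalIntegrable (fun τ : ℝ => g s (τ • u) u u)
      MeasureTheory.volume 0 1 := fun s => (hcont s).intervalIntegrable 0 1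
  have hposint : 0 < ∫ τ in (0:ℝ)..1, (g t (τ • u) u u - g t' (τ • u) u u) := by
    apply intervalIntegral.intervalIntegral_pos_of_pos_on ((hint t).sub (hint t'))
    · intro τ hτ
      have := hpt τ (Set.mem_Icc_of_Ioo hτ)
      linarith
    · norm_num
  rw [intervalIntegral.integral_sub (hint t) (hint t')] at hposint
  linarith
end
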